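/- Let G be a generic singleton cost-sharing game. Then every subgame-perfect outcome of G (with respect to any order of the players) is a Nash equilibrium of G. -/
import Mathlib


/-- A congestion game with `n` players on a finite resource type `R`:
each player has a finite set of actions (each action a set of resources),
and each resource has a delay function `ℕ → ℝ`. -/
structure CGame (R : Type) [DecidableEq R] [Fintype R] (n : ℕ) where
  actions : Fin n → Finset (Finset R)
  delay : R → ℕ → ℝ

namespace CGame

variable {R : Type} [DecidableEq R] [Fintype R] {n : ℕ}

/-- The congestion `x(A)_r`: number of players using resource `r` in profile `A`. -/
def congestion (_G : CGame R n) (A : Fin n → Finset R) (r : R) : ℕ :=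
  (Finset.univ.filter fun i => r ∈ A i).card

/-- The cost of player `i` in profile `A`. -/
def cost (G : CGame R n) (A : Fin n → Finset R) (i : Fin n) : ℝ :=
  ∑ r ∈ A i, G.delay r (G.congestion A r)

/-- `A` is an outcome: each player plays one of his actions. -/
def IsOutcome (G : CGame R n) (A : Fin n → Finset R) : Prop :=
  ∀ i, A i ∈ G.actions i

/-- `A` is a (pure) Nash equilibrium. -/
def IsNash (G : CGame R n) (A : Fin n → Finset R) : Prop :=
  G.IsOutcome A ∧ ∀ i, ∀ B ∈ G.actions i, G.cost A i ≤ G.cost (Function.update A i B) i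

/-- The subgame induced by the first player playing `a`. -/
def subgame (G : CGame R (n + 1)) (a : Finset R) : CGame R n where
  actions := fun i => G.actions i.succ
  delay := fun r y => G.delay r (y + if r ∈ a then 1 else 0)

/-- The subgame induced by the first `m` players playing `P`. -/
def subgameMany {m k : ℕ} (G : CGame R (m + k)) (P : Fin m → Finset R) : CGame R k where
  actions := fun i => G.actions (Fin.natAdd m i)
  delay := fun r y => G.delay r (y + (Finset.univ.filter fun i : Fin m => r ∈ P i).card)

/-- `G^k`: the game on the first `min k n` players. -/
def truncate (G : CGame R n) (k : ℕ) : CGame R (min k n) where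
  actions := fun i => G.actions (Fin.castLE (min_le_right k n) i)
  delay := G.delay

/-- The game reordered so that the player in position `i` is player `σ i`. -/
def reorder (G : CGame R n) (σ : Equiv.Perm (Fin n)) : CGame R n where
  actions := fun i => G.actions (σ i)
  delay := G.delay

/-- Subgame-perfect outcomes with respect to the order `1, …, n`. -/
def IsSPO : {n : ℕ} → CGame R n → (Fin n → Finset R) → Prop
  | 0, _, _ => True
  | _ + 1, G, A =>
      A 0 ∈ G.actions 0 ∧
      ∃ f : Finset R → (Fin _ → Finset R),
        (∀ a ∈ G.actions 0, IsSPO (G.subgame a) (f a)) ∧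
        f (A 0) = Fin.tail A ∧
        ∀ a ∈ G.actions 0,
          G.cost (Fin.cons (A 0) (f (A 0))) 0 ≤ G.cost (Fin.cons a (f a)) 0

/-- `k`-lookahead outcomes with respect to the order `1, …, n`. -/
def IsKLA (k : ℕ) : {n : ℕ} → CGame R n → (Fin n → Finset R) → Prop
  | 0, _, _ => True
  | n + 1, G, A =>
      (∃ (hk : 0 < min k (n + 1)) (B : Fin (min k (n + 1)) → Finset R),
          IsSPO (G.truncate k) B ∧ B ⟨0, hk⟩ = A 0) ∧
      IsKLA k (G.subgame (A 0)) (Fin.tail A)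

/-- `A` is a subgame-perfect outcome of `G` with respect to some order of the players. -/
def IsSPOutcome (G : CGame R n) (A : Fin n → Finset R) : Prop :=
  ∃ σ : Equiv.Perm (Fin n), IsSPO (G.reorder σ) (A ∘ σ)

/-- `A` is a `k`-lookahead outcome of `G` with respect to some order of the players. -/
def IsKLO (k : ℕ) (G : CGame R n) (A : Fin n → Finset R) : Prop :=
  ∃ σ : Equiv.Perm (Fin n), IsKLA k (G.reorder σ) (A ∘ σ)

/-- The cost of player `i` when only the players in `s` play (profile restricted to `s`). -/
def costOn (G : CGame R n) (s : Finset (Fin n)) (A : Fin n → Finset R) (i : Fin n) : ℝ :=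
  ∑ r ∈ A i, G.delay r ((s.filter fun j => r ∈ A j).card)

/-- `G` is generic: in every restriction of the game to a subset of the players,
a player's cost changes whenever his own action changes. -/
def Generic (G : CGame R n) : Prop :=
  ∀ s : Finset (Fin n), ∀ A B : Fin n → Finset R,
    (∀ i ∈ s, A i ∈ G.actions i) → (∀ i ∈ s, B i ∈ G.actions i) →
    ∀ j ∈ s, A j ≠ B j → G.costOn s A j ≠ G.costOn s B j

/-- Utilitarian social cost. -/
def SC (G : CGame R n) (A : Fin n → Finset R) : ℝ :=
  ∑ i, G.cost A i

/-- Minimum social cost over all outcomes. -/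
noncomputable def optSC (G : CGame R n) : ℝ :=
  sInf {y | ∃ A, G.IsOutcome A ∧ y = G.SC A}

/-- The `k`-Lookahead Price of Anarchy. -/
noncomputable def kLPoA (G : CGame R n) (k : ℕ) : ℝ :=
  sSup {y | ∃ A, IsKLO k G A ∧ y = G.SC A / G.optSC}

/-- The Price of Anarchy. -/
noncomputable def PoA (G : CGame R n) : ℝ :=
  sSup {y | ∃ A, G.IsNash A ∧ y = G.SC A / G.optSC}

/-- Opportunity cost `O_A` of an outcome `A` in a symmetric game with action set `𝒜`. -/
noncomputable def oppCost (G : CGame R n) (𝒜 : Finset (Finset R)) (A : Fin n → Finset R) : ℝ :=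
  sInf {y | ∃ P ∈ 𝒜, y = ∑ r ∈ P, G.delay r (G.congestion A r + 1)}

/-- Worst cost (egalitarian social cost) `W_A` of an outcome `A`. -/
noncomputable def worstCost (G : CGame R n) (A : Fin n → Finset R) : ℝ :=
  sSup {y | ∃ i, y = G.cost A i}

/-- Rosenthal's potential function. -/
def potential (G : CGame R n) (A : Fin n → Finset R) : ℝ :=
  ∑ r : R, ∑ i ∈ Finset.Icc 1 (G.congestion A r), G.delay r i

end CGame


/-! ### Auxiliary development for Statement 18. -/

namespace CGame

open Finset

variable {R : Type} [DecidableEq R] [Fintype R] {n : ℕ}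

/-- Players in `S` that can play resource `r`. -/
def capS (H : CGame R n) (S : Finset (Fin n)) (r : R) : Finset (Fin n) :=
  S.filter fun i => ({r} : Finset R) ∈ H.actions i

/-- The "potential load" of resource `r`: players outside `S` actually on `r`
plus players in `S` capable of `r`. -/
def NN (H : CGame R n) (X : Fin n → Finset R) (S : Finset (Fin n)) (r : R) : ℕ :=
  (Finset.univ.filter fun i => if i ∈ S then ({r} : Finset R) ∈ H.actions i else r ∈ X i).card

/-- Greedy round value of resource `r` at state `S`. -/
noncomputable def valS (H : CGame R n) (X : Fin n → Finset R) (S : Finset (Fin n)) (r : R) : ℝ :=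
  H.delay r (H.NN X S r)

/-- Canonical greedy runs. -/
inductive CanonFrom (H : CGame R n) (A : Fin n → Finset R) : Finset (Fin n) → Prop
  | nil : CanonFrom H A ∅
  | step (S : Finset (Fin n)) (r : R) (hne : (H.capS S r).Nonempty)
      (hass : ∀ i ∈ H.capS S r, A i = {r})
      (hmin : ∀ r', (H.capS S r').Nonempty → H.valS A S r ≤ H.valS A S r')
      (hrest : CanonFrom H A (S \ H.capS S r)) : CanonFrom H A S

section Basic

variable {H : CGame R n} {X A : Fin n → Finset R} {S : Finset (Fin n)} {r : R}

/-- For a singleton outcome, a player playing `r` is capable of `r`. -/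
lemma capable_of_play (hsingle : ∀ i, ∀ B ∈ H.actions i, B.card = 1)
    (hout : ∀ i, X i ∈ H.actions i) {i : Fin n} (hi : r ∈ X i) :
    ({r} : Finset R) ∈ H.actions i := by
  obtain ⟨b, hb⟩ := Finset.card_eq_one.mp (hsingle i (X i) (hout i))
  rw [hb] at hi
  rw [Finset.mem_singleton] at hi
  subst hi
  rw [← hb]; exact hout i

lemma cost_eq_delay {i : Fin n} {b : R} (h : X i = {b}) :
    H.cost X i = H.delay b (H.congestion X b) := by
  rw [CGame.cost, h, Finset.sum_singleton]

lemma congestion_le_NN (hsingle : ∀ i, ∀ B ∈ H.actions i, B.card = 1)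
    (hout : ∀ i, X i ∈ H.actions i) : H.congestion X r ≤ H.NN X S r := by
  apply Finset.card_le_card
  intro i hi
  rw [Finset.mem_filter] at hi ⊢
  refine ⟨Finset.mem_univ _, ?_⟩
  split
  · exact capable_of_play hsingle hout hi.2
  · exact hi.2

lemma congestion_eq_NN (hsingle : ∀ i, ∀ B ∈ H.actions i, B.card = 1)
    (hout : ∀ i, X i ∈ H.actions i) (hall : ∀ i ∈ H.capS S r, r ∈ X i) :
    H.congestion X r = H.NN X S r := by
  rw [CGame.congestion, CGame.NN]
  congr 1
  ext i
  simp only [Finset.mem_filter, Finset.mem_univ, true_and]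
  by_cases h : i ∈ S
  · simp only [h, if_true]
    exact ⟨fun hr => capable_of_play hsingle hout hr,
      fun hc => hall i (Finset.mem_filter.mpr ⟨h, hc⟩)⟩
  · simp only [h, if_false]

/-- Removing a set of players (whose membership behaviour matches) keeps `NN` equal. -/
lemma NN_sdiff_eq {U : Finset (Fin n)} (hU : U ⊆ S)
    (h : ∀ i ∈ U, (r ∈ X i ↔ ({r} : Finset R) ∈ H.actions i)) :
    H.NN X (S \ U) r = H.NN X S r := by
  rw [CGame.NN, CGame.NN]
  congr 1
  ext i
  simp only [Finset.mem_filter, Finset.mem_univ, true_and, Finset.mem_sdiff]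
  by_cases hiU : i ∈ U
  · have hiS : i ∈ S := hU hiU
    simp [hiS, hiU, h i hiU]
  · by_cases hiS : i ∈ S <;> simp [hiS, hiU]

lemma NN_sdiff_le (hsingle : ∀ i, ∀ B ∈ H.actions i, B.card = 1)
    (hout : ∀ i, X i ∈ H.actions i) {U : Finset (Fin n)} (hU : U ⊆ S) :
    H.NN X (S \ U) r ≤ H.NN X S r := by
  apply Finset.card_le_card
  intro i hi
  rw [Finset.mem_filter] at hi ⊢
  refine ⟨Finset.mem_univ _, ?_⟩
  rcases hi with ⟨-, hi⟩
  by_cases hiS : i ∈ S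
  · simp only [hiS, if_true]
    by_cases hiU : i ∈ U
    · simp only [Finset.mem_sdiff, hiS, hiU, not_true, and_false, if_false] at hi
      exact capable_of_play hsingle hout hi
    · simpa [Finset.mem_sdiff, hiS, hiU] using hi
  · have : i ∉ S \ U := fun hc => hiS (Finset.mem_sdiff.mp hc).1
    simp only [hiS, if_false]
    simpa [this] using hi

/-- `NN` only depends on the profile outside `S`. -/
lemma NN_congr (h : ∀ i ∉ S, (r ∈ X i ↔ r ∈ A i)) :
    H.NN X S r = H.NN A S r := by
  rw [CGame.NN, CGame.NN]
  congr 1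
  ext i
  simp only [Finset.mem_filter, Finset.mem_univ, true_and]
  by_cases hiS : i ∈ S
  · simp [hiS]
  · simp [hiS, h i hiS]

lemma valS_sdiff_ge (hsingle : ∀ i, ∀ B ∈ H.actions i, B.card = 1)
    (hanti : ∀ r, Antitone (H.delay r))
    (hout : ∀ i, X i ∈ H.actions i) {U : Finset (Fin n)} (hU : U ⊆ S) :
    H.valS X S r ≤ H.valS X (S \ U) r :=
  hanti r (NN_sdiff_le hsingle hout hU)

lemma capS_subset_of_subset {S' : Finset (Fin n)} (h : S' ⊆ S) :
    H.capS S' r ⊆ H.capS S r :=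
  Finset.filter_subset_filter _ h

lemma capS_sdiff {U : Finset (Fin n)} : H.capS (S \ U) r = H.capS S r \ U := by
  rw [CGame.capS, CGame.capS]
  ext i
  simp only [Finset.mem_filter, Finset.mem_sdiff]
  tauto

end Basic

section Exch

variable {H : CGame R n} {X : Fin n → Finset R}

/-- Genericity breaks ties between round values of two resources sharing a capable player. -/
lemma val_ne_of_common_cap (hgen : H.Generic)
    (hout : ∀ i, X i ∈ H.actions i) {S : Finset (Fin n)} {ρ r₁ : R} (hρr : ρ ≠ r₁)
    {j : Fin n} (hjρ : j ∈ H.capS S ρ) (hjr : j ∈ H.capS S r₁) :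
    H.valS X S ρ ≠ H.valS X S r₁ := by
  classical
  set s : Finset (Fin n) := ((Finset.univ \ S) ∪ H.capS S ρ) ∪ H.capS S r₁ with hs
  set Xc : Fin n → Finset R := fun i =>
    if i ∈ H.capS S ρ then {ρ} else if i ∈ H.capS S r₁ then {r₁} else X i with hXc
  set Yc : Fin n → Finset R := fun i =>
    if i ∈ H.capS S r₁ then {r₁} else if i ∈ H.capS S ρ then {ρ} else X i with hYc
  have hcapρS : H.capS S ρ ⊆ S := Finset.filter_subset _ _
  have hcapr₁S : H.capS S r₁ ⊆ S := Finset.filter_subset _ _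
  have hXcout : ∀ i ∈ s, Xc i ∈ H.actions i := by
    intro i _
    simp only [hXc]
    split
    · next h => exact (Finset.mem_filter.mp h).2
    · split
      · next h => exact (Finset.mem_filter.mp h).2
      · exact hout i
  have hYcout : ∀ i ∈ s, Yc i ∈ H.actions i := by
    intro i _
    simp only [hYc]
    split
    · next h => exact (Finset.mem_filter.mp h).2
    · split
      · next h => exact (Finset.mem_filter.mp h).2
      · exact hout i
  have hjs : j ∈ s := by
    simp only [hs, Finset.mem_union]
    exact Or.inl (Or.inr hjρ)
  have hXj : Xc j = {ρ} := by simp only [hXc, hjρ, if_true]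
  have hYj : Yc j = {r₁} := by simp only [hYc, hjr, if_true]
  have hne : Xc j ≠ Yc j := by
    rw [hXj, hYj]
    simp only [ne_eq, Finset.singleton_inj]
    exact hρr
  have hcount : (s.filter fun k => ρ ∈ Xc k) =
      Finset.univ.filter fun i => if i ∈ S then ({ρ} : Finset R) ∈ H.actions i else ρ ∈ X i := by
    ext i
    simp only [Finset.mem_filter, Finset.mem_univ, true_and, hs, Finset.mem_union,
      Finset.mem_sdiff]
    constructor
    · rintro ⟨hi, hXi⟩
      by_cases hicapρ : i ∈ H.capS S ρ
      · have hiS : i ∈ S := hcapρS hicapρ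
        simp only [hiS, if_true]
        exact (Finset.mem_filter.mp hicapρ).2
      · by_cases hicapr : i ∈ H.capS S r₁
        · exfalso
          simp only [hXc, hicapρ, if_false, hicapr, if_true, Finset.mem_singleton] at hXi
          exact hρr hXi
        · have hiS : i ∉ S := by
            intro hiS'
            rcases hi with (hi | hi) | hi
            · tauto
            · exact hicapρ hi
            · exact hicapr hi
          simp only [hiS, if_false]
          simpa only [hXc, hicapρ, if_false, hicapr] using hXi
    · intro h
      by_cases hiS : i ∈ S
      · simp only [hiS, if_true] at h
        have hicapρ : i ∈ H.capS S ρ := Finset.mem_filter.mpr ⟨hiS, h⟩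
        refine ⟨Or.inl (Or.inr hicapρ), ?_⟩
        simp [hXc, hicapρ]
      · simp only [hiS, if_false] at h
        have hicapρ : i ∉ H.capS S ρ := fun hc => hiS (hcapρS hc)
        have hicapr : i ∉ H.capS S r₁ := fun hc => hiS (hcapr₁S hc)
        refine ⟨Or.inl (Or.inl (by simp [hiS])), ?_⟩
        simpa [hXc, hicapρ, hicapr] using h
  have hcount' : (s.filter fun k => r₁ ∈ Yc k) =
      Finset.univ.filter fun i => if i ∈ S then ({r₁} : Finset R) ∈ H.actions i else r₁ ∈ X i := by
    ext i
    simp only [Finset.mem_filter, Finset.mem_univ, true_and, hs, Finset.mem_union,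
      Finset.mem_sdiff]
    constructor
    · rintro ⟨hi, hYi⟩
      by_cases hicapr : i ∈ H.capS S r₁
      · have hiS : i ∈ S := hcapr₁S hicapr
        simp only [hiS, if_true]
        exact (Finset.mem_filter.mp hicapr).2
      · by_cases hicapρ : i ∈ H.capS S ρ
        · exfalso
          simp only [hYc, hicapr, if_false, hicapρ, if_true, Finset.mem_singleton] at hYi
          exact hρr hYi.symm
        · have hiS : i ∉ S := by
            intro hiS'
            rcases hi with (hi | hi) | hi
            · tauto
            · exact hicapρ hi
            · exact hicapr hi
          simp only [hiS, if_false]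
          simpa only [hYc, hicapρ, if_false, hicapr] using hYi
    · intro h
      by_cases hiS : i ∈ S
      · simp only [hiS, if_true] at h
        have hicapr : i ∈ H.capS S r₁ := Finset.mem_filter.mpr ⟨hiS, h⟩
        refine ⟨Or.inr hicapr, ?_⟩
        simp [hYc, hicapr]
      · simp only [hiS, if_false] at h
        have hicapρ : i ∉ H.capS S ρ := fun hc => hiS (hcapρS hc)
        have hicapr : i ∉ H.capS S r₁ := fun hc => hiS (hcapr₁S hc)
        refine ⟨Or.inl (Or.inl (by simp [hiS])), ?_⟩
        simpa [hYc, hicapρ, hicapr] using h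
  have hcostX : H.costOn s Xc j = H.valS X S ρ := by
    rw [CGame.costOn, hXj, Finset.sum_singleton, CGame.valS, CGame.NN, hcount]
  have hcostY : H.costOn s Yc j = H.valS X S r₁ := by
    rw [CGame.costOn, hYj, Finset.sum_singleton, CGame.valS, CGame.NN, hcount']
  have := hgen s Xc Yc hXcout hYcout j hjs hne
  rw [hcostX, hcostY] at this
  exact this

/-- If `ρ` is also minimal at a canon state, the run can be rearranged to start with `ρ`. -/
lemma exch (hsingle : ∀ i, ∀ B ∈ H.actions i, B.card = 1)
    (hanti : ∀ r, Antitone (H.delay r)) (hgen : H.Generic)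
    (hout : ∀ i, X i ∈ H.actions i) {S : Finset (Fin n)}
    (hrun : CanonFrom H X S) :
    ∀ {ρ : R}, (H.capS S ρ).Nonempty →
      (∀ r', (H.capS S r').Nonempty → H.valS X S ρ ≤ H.valS X S r') →
      (∀ i ∈ H.capS S ρ, X i = {ρ}) ∧ CanonFrom H X (S \ H.capS S ρ) := by
  induction hrun with
  | nil =>
    intro ρ hρ _
    obtain ⟨j, hj⟩ := hρ
    exact absurd ((Finset.mem_filter.mp hj).1) (Finset.notMem_empty j)
  | step S r₁ hne₁ hass₁ hmin₁ hrest ih =>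
    intro ρ hρ hmin
    by_cases hr : r₁ = ρ
    · subst hr
      exact ⟨hass₁, hrest⟩
    have hρr : ρ ≠ r₁ := fun h => hr h.symm
    have htie : H.valS X S ρ = H.valS X S r₁ :=
      le_antisymm (hmin r₁ hne₁) (hmin₁ ρ hρ)
    have hdisj : ∀ j, j ∈ H.capS S ρ → j ∉ H.capS S r₁ := by
      intro j hjρ hjr
      exact val_ne_of_common_cap hgen hout hρr hjρ hjr htie
    have hT₁S : H.capS S r₁ ⊆ S := Finset.filter_subset _ _
    have hcapρ' : H.capS (S \ H.capS S r₁) ρ = H.capS S ρ := by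
      rw [capS_sdiff]
      apply Finset.sdiff_eq_self_of_disjoint
      exact Finset.disjoint_left.mpr hdisj
    have hvalρeq : H.valS X (S \ H.capS S r₁) ρ = H.valS X S ρ := by
      rw [CGame.valS, CGame.valS]
      congr 1
      apply NN_sdiff_eq hT₁S
      intro i hi
      constructor
      · intro hri
        rw [hass₁ i hi, Finset.mem_singleton] at hri
        exact absurd hri.symm hr
      · intro hc
        exact absurd (Finset.mem_filter.mpr ⟨hT₁S hi, hc⟩) fun hcc => hdisj i hcc hi
    have hminIH : ∀ r', (H.capS (S \ H.capS S r₁) r').Nonempty →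
        H.valS X (S \ H.capS S r₁) ρ ≤ H.valS X (S \ H.capS S r₁) r' := by
      intro r' hner'
      have hr'S : (H.capS S r').Nonempty :=
        hner'.mono (capS_subset_of_subset (Finset.sdiff_subset))
      rw [hvalρeq]
      calc H.valS X S ρ ≤ H.valS X S r' := hmin r' hr'S
        _ ≤ H.valS X (S \ H.capS S r₁) r' :=
          valS_sdiff_ge hsingle hanti hout (Finset.filter_subset _ _)
    have ihres := ih (ρ := ρ) (by rw [hcapρ']; exact hρ) hminIH
    obtain ⟨hassρ, hrunρ⟩ := ihres
    rw [hcapρ'] at hassρ hrunρ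
    refine ⟨hassρ, ?_⟩
    have hcapr₁' : H.capS (S \ H.capS S ρ) r₁ = H.capS S r₁ := by
      rw [capS_sdiff]
      apply Finset.sdiff_eq_self_of_disjoint
      exact Finset.disjoint_right.mpr hdisj
    refine CanonFrom.step _ r₁ (by rw [hcapr₁']; exact hne₁) ?_ ?_ ?_
    · rw [hcapr₁']
      exact hass₁
    · intro r' hner'
      have hr'S : (H.capS S r').Nonempty :=
        hner'.mono (capS_subset_of_subset (Finset.sdiff_subset))
      have hval₁ : H.valS X (S \ H.capS S ρ) r₁ = H.valS X S r₁ := by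
        rw [CGame.valS, CGame.valS]
        congr 1
        apply NN_sdiff_eq (Finset.filter_subset _ _)
        intro i hi
        constructor
        · intro hri
          rw [hassρ i hi, Finset.mem_singleton] at hri
          exact absurd hri.symm hρr
        · intro hc
          exact absurd hi fun hcc => hdisj i hcc (Finset.mem_filter.mpr ⟨(Finset.filter_subset _ _) hi, hc⟩)
      rw [hval₁]
      calc H.valS X S r₁ ≤ H.valS X S r' := hmin₁ r' hr'S
        _ ≤ H.valS X (S \ H.capS S ρ) r' :=
          valS_sdiff_ge hsingle hanti hout (Finset.filter_subset _ _)
    · rw [hcapr₁']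
      have hcomm : (S \ H.capS S ρ) \ H.capS S r₁ = (S \ H.capS S r₁) \ H.capS S ρ := by
        ext i; simp only [Finset.mem_sdiff]; tauto
      rw [hcomm]
      exact hrunρ

end Exch

section Nash

variable {H : CGame R n} {A : Fin n → Finset R}

lemma congestion_update_add_one {i : Fin n} {b : R} (hb : b ∉ A i) :
    H.congestion (Function.update A i {b}) b = H.congestion A b + 1 := by
  rw [CGame.congestion, CGame.congestion]
  have : Finset.univ.filter (fun j => b ∈ Function.update A i {b} j) =
      insert i (Finset.univ.filter fun j => b ∈ A j) := by
    ext j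
    simp only [Finset.mem_filter, Finset.mem_univ, true_and, Finset.mem_insert]
    by_cases hj : j = i
    · subst hj
      simp [Function.update_self]
    · simp [Function.update_of_ne hj, hj]
  rw [this, Finset.card_insert_of_notMem (by simp [hb])]

lemma congestion_add_one_le_NN (hsingle : ∀ i, ∀ B ∈ H.actions i, B.card = 1)
    (hout : ∀ i, A i ∈ H.actions i) {S : Finset (Fin n)} {i : Fin n} {b : R}
    (hi : i ∈ H.capS S b) (hb : b ∉ A i) :
    H.congestion A b + 1 ≤ H.NN A S b := by
  rw [CGame.congestion, CGame.NN]
  rw [← Finset.card_insert_of_notMem (by simp [hb] :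
    i ∉ Finset.univ.filter fun j => b ∈ A j)]
  apply Finset.card_le_card
  intro j hj
  rw [Finset.mem_insert] at hj
  rw [Finset.mem_filter]
  refine ⟨Finset.mem_univ _, ?_⟩
  rcases hj with rfl | hj
  · simp [(Finset.mem_filter.mp hi).1, (Finset.mem_filter.mp hi).2]
  · rw [Finset.mem_filter] at hj
    by_cases hjS : j ∈ S
    · simp only [hjS, if_true]
      exact capable_of_play hsingle hout hj.2
    · simp only [hjS, if_false]
      exact hj.2

/-- A canonical outcome satisfies the Nash conditions for all players in `S`. -/
lemma canon_nash (hsingle : ∀ i, ∀ B ∈ H.actions i, B.card = 1)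
    (hanti : ∀ r, Antitone (H.delay r))
    (hout : ∀ i, A i ∈ H.actions i) {S : Finset (Fin n)}
    (hrun : CanonFrom H A S) :
    ∀ i ∈ S, ∀ Bg ∈ H.actions i, H.cost A i ≤ H.cost (Function.update A i Bg) i := by
  induction hrun with
  | nil => intro i hi; exact absurd hi (Finset.notMem_empty i)
  | step S r₁ hne₁ hass₁ hmin₁ hrest ih =>
    intro i hi Bg hBg
    by_cases hiT : i ∈ H.capS S r₁
    · obtain ⟨b, hb⟩ := Finset.card_eq_one.mp (hsingle i Bg hBg)
      subst hb
      have hAi : A i = {r₁} := hass₁ i hiT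
      by_cases hbr : b = r₁
      · subst hbr
        rw [← hAi, Function.update_eq_self]
      have hbAi : b ∉ A i := by
        rw [hAi, Finset.mem_singleton]
        exact hbr
      have hdev : H.cost (Function.update A i {b}) i =
          H.delay b (H.congestion A b + 1) := by
        rw [cost_eq_delay (Function.update_self i ({b} : Finset R) A),
          congestion_update_add_one hbAi]
      have hcost : H.cost A i = H.valS A S r₁ := by
        rw [cost_eq_delay hAi, CGame.valS,
          congestion_eq_NN hsingle hout (fun j hj => by rw [hass₁ j hj]; exact Finset.mem_singleton_self r₁)]
      have hib : i ∈ H.capS S b :=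
        Finset.mem_filter.mpr ⟨(Finset.mem_filter.mp hiT).1, hBg⟩
      rw [hdev, hcost]
      calc H.valS A S r₁ ≤ H.valS A S b := hmin₁ b ⟨i, hib⟩
        _ ≤ H.delay b (H.congestion A b + 1) :=
          hanti b (congestion_add_one_le_NN hsingle hout hib hbAi)
    · exact ih i (Finset.mem_sdiff.mpr ⟨hi, hiT⟩) Bg hBg

end Nash

section Key

variable {H : CGame R n} {A X : Fin n → Finset R} {S : Finset (Fin n)} {p : Fin n} {b r : R}

lemma costOn_univ_eq_cost (X : Fin n → Finset R) (j : Fin n) :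
    H.costOn Finset.univ X j = H.cost X j := rfl

lemma capS_insert_of_act (hact : ({r} : Finset R) ∈ H.actions p) :
    H.capS (insert p S) r = insert p (H.capS S r) := by
  rw [CGame.capS, CGame.capS, Finset.filter_insert, if_pos hact]

lemma capS_insert_of_not_act (hact : ({r} : Finset R) ∉ H.actions p) :
    H.capS (insert p S) r = H.capS S r := by
  rw [CGame.capS, CGame.capS, Finset.filter_insert, if_neg hact]

/-- Pinned state vs free state: equal potential load. -/
lemma NN_pin_eq (hpS : p ∉ S) (hbact : ({b} : Finset R) ∈ H.actions p)
    (hXp : X p = {b}) (hag : ∀ i, i ∉ S → i ≠ p → X i = A i)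
    (hr : ({r} : Finset R) ∉ H.actions p ∨ r = b) :
    H.NN X S r = H.NN A (insert p S) r := by
  rw [CGame.NN, CGame.NN]
  congr 1
  ext i
  simp only [Finset.mem_filter, Finset.mem_univ, true_and, Finset.mem_insert]
  by_cases hip : i = p
  · subst hip
    simp only [hpS, if_false, true_or, if_true, hXp, Finset.mem_singleton]
    rcases hr with hr | hr
    · constructor
      · intro h; subst h; exact absurd hbact hr
      · intro h; exact absurd h hr
    · subst hr; simp [hbact]
  · by_cases hiS : i ∈ S
    · simp [hiS, hip]
    · simp only [hiS, if_false, hip, false_or]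
      rw [hag i hiS hip]

/-- Pinned state vs free state: one fewer on resources the pinned player abandons. -/
lemma NN_pin_succ (hpS : p ∉ S) (hXp : X p = {b})
    (hag : ∀ i, i ∉ S → i ≠ p → X i = A i)
    (hr : ({r} : Finset R) ∈ H.actions p) (hrb : r ≠ b) :
    H.NN X S r + 1 = H.NN A (insert p S) r := by
  rw [CGame.NN, CGame.NN]
  have : (Finset.univ.filter fun i =>
      if i ∈ insert p S then ({r} : Finset R) ∈ H.actions i else r ∈ A i) =
      insert p (Finset.univ.filter fun i =>
        if i ∈ S then ({r} : Finset R) ∈ H.actions i else r ∈ X i) := by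
    ext i
    simp only [Finset.mem_filter, Finset.mem_univ, true_and, Finset.mem_insert]
    by_cases hip : i = p
    · subst hip
      simp [hpS, hr]
    · by_cases hiS : i ∈ S
      · simp [hiS, hip]
      · simp only [hiS, if_false, hip, false_or]
        rw [hag i hiS hip]
  rw [this, Finset.card_insert_of_notMem (by simp [hpS, hXp, hrb])]

lemma val_pin_eq (hanti : ∀ r, Antitone (H.delay r)) (hpS : p ∉ S)
    (hbact : ({b} : Finset R) ∈ H.actions p) (hXp : X p = {b})
    (hag : ∀ i, i ∉ S → i ≠ p → X i = A i)
    (hr : ({r} : Finset R) ∉ H.actions p ∨ r = b) :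
    H.valS X S r = H.valS A (insert p S) r := by
  rw [CGame.valS, CGame.valS, NN_pin_eq hpS hbact hXp hag hr]

lemma val_pin_ge (hanti : ∀ r, Antitone (H.delay r)) (hpS : p ∉ S)
    (hbact : ({b} : Finset R) ∈ H.actions p) (hXp : X p = {b})
    (hag : ∀ i, i ∉ S → i ≠ p → X i = A i) (r : R) :
    H.valS A (insert p S) r ≤ H.valS X S r := by
  by_cases hr : ({r} : Finset R) ∈ H.actions p
  · by_cases hrb : r = b
    · exact le_of_eq (val_pin_eq hanti hpS hbact hXp hag (Or.inr hrb)).symm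
    · rw [CGame.valS, CGame.valS, ← NN_pin_succ hpS hXp hag hr hrb]
      exact hanti r (Nat.le_succ _)
  · exact le_of_eq (val_pin_eq hanti hpS hbact hXp hag (Or.inl hr)).symm

/-- The key lemma: a leader minimizing over pinned canonical continuations
yields a canonical run of the full state. -/
lemma key (hsingle : ∀ i, ∀ B ∈ H.actions i, B.card = 1)
    (hanti : ∀ r, Antitone (H.delay r)) (hgen : H.Generic)
    (p : Fin n) (A : Fin n → Finset R) (f : Finset R → Fin n → Finset R)
    (hfA : f (A p) = A) (hAp : A p ∈ H.actions p)
    (hfp : ∀ B ∈ H.actions p, f B p = B)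
    (hfout : ∀ B ∈ H.actions p, ∀ i, f B i ∈ H.actions i)
    (hcost : ∀ B ∈ H.actions p, H.cost A p ≤ H.cost (f B) p) :
    ∀ (k : ℕ) (S : Finset (Fin n)), S.card ≤ k → p ∉ S →
      (∀ B ∈ H.actions p, ∀ i, i ∉ S → i ≠ p → f B i = A i) →
      (∀ B ∈ H.actions p, CanonFrom H (f B) S) →
      CanonFrom H A (insert p S) := by
  classical
  have houtA : ∀ i, A i ∈ H.actions i := by
    rw [← hfA]; exact hfout (A p) hAp
  obtain ⟨bstar, hbstar⟩ := Finset.card_eq_one.mp (hsingle p (A p) hAp)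
  have hbact : ({bstar} : Finset R) ∈ H.actions p := hbstar ▸ hAp
  intro k
  induction k using Nat.strong_induction_on with
  | _ k ih =>
    intro S hcard hpS hagree hcanon
    -- the free state and its minimal resource
    set F := insert p S with hF
    have hcapbF : p ∈ H.capS F bstar :=
      Finset.mem_filter.mpr ⟨Finset.mem_insert_self _ _, hbact⟩
    set RR : Finset R := Finset.univ.filter (fun r => (H.capS F r).Nonempty) with hRR
    have hbRR : bstar ∈ RR := Finset.mem_filter.mpr ⟨Finset.mem_univ _, ⟨p, hcapbF⟩⟩
    obtain ⟨ρ, hρRR, hρmin⟩ := Finset.exists_min_image RR (H.valS A F) ⟨bstar, hbRR⟩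
    have hminF : ∀ r', (H.capS F r').Nonempty → H.valS A F ρ ≤ H.valS A F r' :=
      fun r' h => hρmin r' (Finset.mem_filter.mpr ⟨Finset.mem_univ _, h⟩)
    have hcapρne : (H.capS F ρ).Nonempty := (Finset.mem_filter.mp hρRR).2
    have hSsub : S ⊆ F := Finset.subset_insert _ _
    -- generic exchange fact for suitable pinned profiles
    have hexch : ∀ B ∈ H.actions p, (({ρ} : Finset R) ∉ H.actions p ∨ B = {ρ}) →
        (H.capS S ρ).Nonempty →
        (∀ i ∈ H.capS S ρ, f B i = {ρ}) ∧ CanonFrom H (f B) (S \ H.capS S ρ) := by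
      intro B hB hside hcapSρ
      obtain ⟨b, hb⟩ := Finset.card_eq_one.mp (hsingle p B hB)
      have hfpB : f B p = {b} := by rw [hfp B hB, hb]
      have hbact' : ({b} : Finset R) ∈ H.actions p := hb ▸ hB
      have hagB : ∀ i, i ∉ S → i ≠ p → f B i = A i := hagree B hB
      have hside' : ({ρ} : Finset R) ∉ H.actions p ∨ ρ = b := by
        rcases hside with h | h
        · exact Or.inl h
        · right
          rw [h] at hb
          exact Finset.singleton_inj.mp hb
      apply exch hsingle hanti hgen (hfout B hB) (hcanon B hB) hcapSρ
      intro r' hner'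
      have h1 : H.valS (f B) S ρ = H.valS A F ρ :=
        val_pin_eq hanti hpS hbact' hfpB hagB hside'
      have h2 : H.valS A F ρ ≤ H.valS A F r' :=
        hminF r' (hner'.mono (capS_subset_of_subset hSsub))
      have h3 : H.valS A F r' ≤ H.valS (f B) S r' :=
        val_pin_ge hanti hpS hbact' hfpB hagB r'
      rw [h1]
      exact h2.trans h3
    by_cases hρact : ({ρ} : Finset R) ∈ H.actions p
    · -- Case II : the leader is capable of the minimal resource; he must take it
      have hfρout : ∀ i, f {ρ} i ∈ H.actions i := hfout {ρ} hρact
      have hfρp : f {ρ} p = {ρ} := hfp {ρ} hρact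
      have hρS : (∀ i ∈ H.capS S ρ, f {ρ} i = {ρ}) ∧
          CanonFrom H (f {ρ}) (S \ H.capS S ρ) := by
        rcases (H.capS S ρ).eq_empty_or_nonempty with hemp | hne
        · constructor
          · intro i hi; rw [hemp] at hi; exact absurd hi (Finset.notMem_empty i)
          · rw [hemp, Finset.sdiff_empty]; exact hcanon {ρ} hρact
        · exact hexch {ρ} hρact (Or.inr rfl) hne
      obtain ⟨hassρ, hrunρ⟩ := hρS
      have hcostρ : H.cost (f {ρ}) p = H.valS A F ρ := by
        rw [cost_eq_delay hfρp, CGame.valS,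
          congestion_eq_NN hsingle hfρout
            (fun j hj => by rw [hassρ j hj]; exact Finset.mem_singleton_self ρ),
          NN_pin_eq hpS hρact hfρp (hagree {ρ} hρact) (Or.inr rfl)]
      have hcostA_ge : H.valS A F bstar ≤ H.cost A p := by
        rw [cost_eq_delay hbstar, CGame.valS]
        exact hanti bstar (congestion_le_NN hsingle houtA)
      have hchain : H.cost A p = H.cost (f {ρ}) p := by
        have h1 : H.cost A p ≤ H.cost (f {ρ}) p := hcost {ρ} hρact
        have h2 : H.cost (f {ρ}) p ≤ H.cost A p := by
          rw [hcostρ]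
          exact (hρmin bstar hbRR).trans hcostA_ge
        exact le_antisymm h1 h2
      have hApρ : A p = {ρ} := by
        by_contra hne
        have hnegen := hgen Finset.univ A (f {ρ}) (fun i _ => houtA i)
          (fun i _ => hfρout i) p (Finset.mem_univ p) (by rw [hfρp]; exact hne)
        rw [costOn_univ_eq_cost, costOn_univ_eq_cost] at hnegen
        exact hnegen hchain
      have hfρA : f {ρ} = A := by rw [← hApρ, hfA]
      rw [hfρA] at hassρ hrunρ
      refine CanonFrom.step F ρ ?_ ?_ ?_ ?_
      · rw [hF, capS_insert_of_act hρact]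
        exact Finset.insert_nonempty _ _
      · rw [hF, capS_insert_of_act hρact]
        intro i hi
        rcases Finset.mem_insert.mp hi with rfl | hi
        · exact hApρ
        · exact hassρ i hi
      · exact hminF
      · rw [hF, capS_insert_of_act hρact]
        have hset : insert p S \ insert p (H.capS S ρ) = S \ H.capS S ρ := by
          ext i
          simp only [Finset.mem_sdiff, Finset.mem_insert, not_or]
          constructor
          · rintro ⟨hi | hi, hip, hic⟩
            · exact absurd hi hip
            · exact ⟨hi, hic⟩
          · intro ⟨hi, hic⟩
            exact ⟨Or.inr hi, fun h => hpS (h ▸ hi), hic⟩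
        rw [hset]
        exact hrunρ
    · -- Case I : leader not capable of the minimal resource; peel it and recurse
      have hcapF : H.capS F ρ = H.capS S ρ := by
        rw [hF, capS_insert_of_not_act hρact]
      have hcapSρ : (H.capS S ρ).Nonempty := by rw [← hcapF]; exact hcapρne
      have hassA : ∀ i ∈ H.capS S ρ, A i = {ρ} := by
        have := (hexch (A p) hAp (Or.inl hρact) hcapSρ).1
        rwa [hfA] at this
      have hcard' : (S \ H.capS S ρ).card < k := by
        have hss : S \ H.capS S ρ ⊂ S :=
          Finset.sdiff_ssubset (Finset.filter_subset _ _) hcapSρ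
        exact lt_of_lt_of_le (Finset.card_lt_card hss) hcard
      have hrec := ih (S \ H.capS S ρ).card hcard' (S \ H.capS S ρ) le_rfl
        (fun h => hpS (Finset.mem_sdiff.mp h).1) ?_ ?_
      · refine CanonFrom.step F ρ ?_ ?_ ?_ ?_
        · rw [hcapF]; exact hcapSρ
        · rw [hcapF]; exact hassA
        · exact hminF
        · have hset : F \ H.capS F ρ = insert p (S \ H.capS S ρ) := by
            rw [hcapF, hF]
            ext i
            simp only [Finset.mem_sdiff, Finset.mem_insert]
            constructor
            · rintro ⟨hi | hi, hic⟩
              · exact Or.inl hi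
              · exact Or.inr ⟨hi, hic⟩
            · rintro (rfl | ⟨hi, hic⟩)
              · exact ⟨Or.inl rfl, fun h => hpS ((Finset.filter_subset _ _) h)⟩
              · exact ⟨Or.inr hi, hic⟩
          rw [hset]
          exact hrec
      · -- agreement on the larger complement
        intro B hB i hi hip
        by_cases hiS : i ∈ S
        · have hicap : i ∈ H.capS S ρ := by
            by_contra hic
            exact hi (Finset.mem_sdiff.mpr ⟨hiS, hic⟩)
          rw [(hexch B hB (Or.inl hρact) hcapSρ).1 i hicap, hassA i hicap]
        · exact hagree B hB i hiS hip
      · -- canonical runs on the smaller state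
        intro B hB
        exact (hexch B hB (Or.inl hρact) hcapSρ).2

end Key

section Sub

variable {H : CGame R (n + 1)}

@[simp] lemma subgame_actions (a : Finset R) (i : Fin n) :
    (H.subgame a).actions i = H.actions i.succ := rfl

@[simp] lemma subgame_delay (a : Finset R) (r : R) (y : ℕ) :
    (H.subgame a).delay r y = H.delay r (y + if r ∈ a then 1 else 0) := rfl

/-- The successor embedding. -/
def sEmb (n : ℕ) : Fin n ↪ Fin (n + 1) := ⟨Fin.succ, Fin.succ_injective n⟩

lemma zero_notMem_map_sEmb {s : Finset (Fin n)} : (0 : Fin (n + 1)) ∉ s.map (sEmb n) := by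
  simp only [Finset.mem_map, sEmb, Function.Embedding.coeFn_mk]
  rintro ⟨j, -, hj⟩
  exact Fin.succ_ne_zero j hj

lemma insert_zero_map_univ :
    insert (0 : Fin (n + 1)) ((Finset.univ : Finset (Fin n)).map (sEmb n)) = Finset.univ := by
  ext i
  simp only [Finset.mem_insert, Finset.mem_map, Finset.mem_univ, true_and, iff_true, sEmb,
    Function.Embedding.coeFn_mk]
  rcases Fin.eq_zero_or_eq_succ i with h | ⟨j, hj⟩
  · exact Or.inl h
  · exact Or.inr ⟨j, hj.symm⟩

lemma map_sdiff' {α β : Type*} [DecidableEq α] [DecidableEq β] (f : α ↪ β)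
    (s t : Finset α) : (s \ t).map f = s.map f \ t.map f := by
  ext b
  simp only [Finset.mem_map, Finset.mem_sdiff]
  constructor
  · rintro ⟨a, ⟨has, hat⟩, rfl⟩
    exact ⟨⟨a, has, rfl⟩, by rintro ⟨a', ha', ha''⟩; exact hat (f.injective ha'' ▸ ha')⟩
  · rintro ⟨⟨a, has, rfl⟩, hb⟩
    exact ⟨a, ⟨has, fun hat => hb ⟨a, hat, rfl⟩⟩, rfl⟩

lemma capS_map (a : Finset R) (S' : Finset (Fin n)) (r : R) :
    H.capS (S'.map (sEmb n)) r = ((H.subgame a).capS S' r).map (sEmb n) := by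
  rw [CGame.capS, CGame.capS, Finset.filter_map]
  rfl

lemma NN_cons (a : Finset R) (T : Fin n → Finset R) (S' : Finset (Fin n)) (r : R) :
    H.NN (Fin.cons a T) (S'.map (sEmb n)) r =
      (H.subgame a).NN T S' r + (if r ∈ a then 1 else 0) := by
  have hsucc : ∀ j : Fin n, (Fin.succ j ∈ S'.map (sEmb n)) ↔ j ∈ S' := by
    intro j
    simp only [Finset.mem_map, sEmb, Function.Embedding.coeFn_mk]
    exact ⟨fun ⟨j', hj', hjj⟩ => (Fin.succ_injective n hjj) ▸ hj', fun h => ⟨j, h, rfl⟩⟩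
  rw [CGame.NN, Finset.card_filter, Fin.sum_univ_succ]
  have hzero : (if (if (0 : Fin (n+1)) ∈ S'.map (sEmb n) then ({r} : Finset R) ∈ H.actions 0
      else r ∈ (Fin.cons a T : Fin (n+1) → Finset R) 0) then (1 : ℕ) else 0) =
      (if r ∈ a then 1 else 0) := by
    simp [sEmb, Fin.succ_ne_zero]
  have hrest : ∀ j : Fin n, (if (if Fin.succ j ∈ S'.map (sEmb n)
        then ({r} : Finset R) ∈ H.actions (Fin.succ j)
        else r ∈ (Fin.cons a T : Fin (n+1) → Finset R) (Fin.succ j))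
        then (1 : ℕ) else 0) =
      (if (if j ∈ S' then ({r} : Finset R) ∈ (H.subgame a).actions j else r ∈ T j)
        then (1 : ℕ) else 0) := by
    intro j
    by_cases hj : j ∈ S' <;> simp [hsucc j, hj]
  rw [hzero, Finset.sum_congr rfl (fun j _ => hrest j), CGame.NN, Finset.card_filter]
  exact add_comm _ _

lemma valS_cons (a : Finset R) (T : Fin n → Finset R) (S' : Finset (Fin n)) (r : R) :
    H.valS (Fin.cons a T) (S'.map (sEmb n)) r = (H.subgame a).valS T S' r := by
  rw [CGame.valS, CGame.valS, NN_cons, subgame_delay]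

/-- Canonical runs of a subgame correspond to canonical runs with the leader pinned. -/
lemma canon_cons {a : Finset R} {T : Fin n → Finset R} {S' : Finset (Fin n)}
    (h : CanonFrom (H.subgame a) T S') :
    CanonFrom H (Fin.cons a T) (S'.map (sEmb n)) := by
  induction h with
  | nil =>
    rw [Finset.map_empty]
    exact CanonFrom.nil
  | step S' r hne hass hmin hrest ihr =>
    refine CanonFrom.step _ r ?_ ?_ ?_ ?_
    · rw [capS_map a]
      exact hne.map
    · rw [capS_map a]
      intro i hi
      obtain ⟨j, hj, rfl⟩ := Finset.mem_map.mp hi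
      exact hass j hj
    · intro r' hner'
      rw [valS_cons, valS_cons]
      apply hmin
      rw [capS_map a] at hner'
      obtain ⟨i, hi⟩ := hner'
      obtain ⟨j, hj, rfl⟩ := Finset.mem_map.mp hi
      exact ⟨j, hj⟩
    · rw [capS_map a, ← map_sdiff']
      exact ihr

/-- Genericity is inherited by subgames along legal actions. -/
lemma subgame_generic (hgen : H.Generic) {a : Finset R} (ha : a ∈ H.actions 0) :
    (H.subgame a).Generic := by
  intro s T U hT hU j hjs hne
  have hcorr : ∀ (X : Fin n → Finset R), (∀ i ∈ s, X i ∈ (H.subgame a).actions i) →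
      (H.subgame a).costOn s X j = H.costOn (insert 0 (s.map (sEmb n))) (Fin.cons a X) j.succ := by
    intro X hX
    rw [CGame.costOn, CGame.costOn]
    apply Finset.sum_congr rfl
    intro r _
    rw [subgame_delay]
    congr 1
    rw [Finset.filter_insert]
    have hmap : (s.map (sEmb n)).filter (fun k => r ∈ (Fin.cons a X : Fin (n+1) → Finset R) k) =
        (s.filter fun k => r ∈ X k).map (sEmb n) := by
      rw [Finset.filter_map]
      rfl
    by_cases hra : r ∈ a
    · rw [if_pos (show r ∈ (Fin.cons a X : Fin (n+1) → Finset R) 0 from hra),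
        Finset.card_insert_of_notMem (fun hc => zero_notMem_map_sEmb ((Finset.filter_subset _ _) hc)),
        hmap, Finset.card_map, if_pos hra]
    · rw [if_neg (show r ∉ (Fin.cons a X : Fin (n+1) → Finset R) 0 from hra), hmap,
        Finset.card_map, if_neg hra, add_zero]
  rw [hcorr T hT, hcorr U hU]
  apply hgen (insert 0 (s.map (sEmb n))) (Fin.cons a T) (Fin.cons a U)
  · intro i hi
    rcases Finset.mem_insert.mp hi with rfl | hi
    · rw [Fin.cons_zero]; exact ha
    · obtain ⟨k, hk, rfl⟩ := Finset.mem_map.mp hi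
      exact hT k hk
  · intro i hi
    rcases Finset.mem_insert.mp hi with rfl | hi
    · rw [Fin.cons_zero]; exact ha
    · obtain ⟨k, hk, rfl⟩ := Finset.mem_map.mp hi
      exact hU k hk
  · exact Finset.mem_insert_of_mem (Finset.mem_map.mpr ⟨j, hjs, rfl⟩)
  · exact hne

end Sub

/-- A subgame-perfect outcome is an outcome. -/
lemma isSPO_outcome : ∀ {n : ℕ} (H : CGame R n) (B : Fin n → Finset R),
    IsSPO H B → H.IsOutcome B := by
  intro n
  induction n with
  | zero => intro H B _ i; exact i.elim0
  | succ n IH =>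
    intro H B hspo
    obtain ⟨h0, f, hf, hfA, -⟩ := hspo
    intro i
    rcases Fin.eq_zero_or_eq_succ i with rfl | ⟨j, rfl⟩
    · exact h0
    · have := IH (H.subgame (B 0)) (f (B 0)) (hf (B 0) h0) j
      rw [hfA] at this
      exact this

/-- Main structural theorem: subgame-perfect outcomes are canonical. -/
lemma isSPO_canon : ∀ {n : ℕ} (H : CGame R n),
    (∀ i, ∀ B ∈ H.actions i, B.card = 1) → (∀ r, Antitone (H.delay r)) → H.Generic →
    ∀ B : Fin n → Finset R, IsSPO H B → CanonFrom H B Finset.univ := by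
  intro n
  induction n with
  | zero =>
    intro H _ _ _ B _
    have : (Finset.univ : Finset (Fin 0)) = ∅ := rfl
    rw [this]
    exact CanonFrom.nil
  | succ n IH =>
    intro H hsingle hanti hgen B hspo
    obtain ⟨h0, f, hf, hfA, hmin⟩ := hspo
    have hconsB : Fin.cons (B 0) (f (B 0)) = B := by
      rw [hfA]; exact Fin.cons_self_tail B
    set S : Finset (Fin (n+1)) := (Finset.univ : Finset (Fin n)).map (sEmb n) with hS
    have hkey := key (H := H) hsingle hanti hgen 0 B
      (fun a => Fin.cons a (f a)) hconsB h0
      (fun a _ => rfl)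
      ?_ ?_ S.card S le_rfl zero_notMem_map_sEmb ?_ ?_
    · rwa [hS, insert_zero_map_univ] at hkey
    · -- hfout
      intro a ha i
      rcases Fin.eq_zero_or_eq_succ i with rfl | ⟨j, rfl⟩
      · exact ha
      · exact isSPO_outcome (H.subgame a) (f a) (hf a ha) j
    · -- hcost
      intro a ha
      rw [hconsB] at hmin
      exact hmin a ha
    · -- hagree (vacuous)
      intro a ha i hi hip
      exfalso
      rcases Fin.eq_zero_or_eq_succ i with rfl | ⟨j, rfl⟩
      · exact hip rfl
      · exact hi (Finset.mem_map.mpr ⟨j, Finset.mem_univ j, rfl⟩)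
    · -- hcanon
      intro a ha
      exact canon_cons (IH (H.subgame a)
        (fun i B hB => hsingle i.succ B hB)
        (fun r y₁ y₂ hy => hanti r (by omega))
        (subgame_generic hgen ha) (f a) (hf a ha))

end CGame

namespace CGame

variable {R : Type} [DecidableEq R] [Fintype R] {n : ℕ}

lemma card_filter_perm (σ : Equiv.Perm (Fin n)) (P : Fin n → Prop) [DecidablePred P] :
    (Finset.univ.filter fun i => P (σ i)).card = (Finset.univ.filter P).card := by
  apply Finset.card_bij (fun i _ => σ i)
  · intro i hi
    rw [Finset.mem_filter] at hi ⊢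
    exact ⟨Finset.mem_univ _, hi.2⟩
  · intro i _ j _ h
    exact σ.injective h
  · intro k hk
    rw [Finset.mem_filter] at hk
    exact ⟨σ.symm k, Finset.mem_filter.mpr ⟨Finset.mem_univ _, by simpa using hk.2⟩, by simp⟩

lemma congestion_reorder {G : CGame R n} (σ : Equiv.Perm (Fin n)) (Z : Fin n → Finset R) (r : R) :
    (G.reorder σ).congestion (Z ∘ σ) r = G.congestion Z r := by
  rw [CGame.congestion, CGame.congestion]
  exact card_filter_perm σ (fun i => r ∈ Z i)

lemma cost_reorder {G : CGame R n} (σ : Equiv.Perm (Fin n)) (Z : Fin n → Finset R) (i : Fin n) :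
    (G.reorder σ).cost (Z ∘ σ) i = G.cost Z (σ i) := by
  rw [CGame.cost, CGame.cost]
  apply Finset.sum_congr rfl
  intro r _
  rw [congestion_reorder]
  rfl

lemma reorder_generic {G : CGame R n} (hgen : G.Generic) (σ : Equiv.Perm (Fin n)) :
    (G.reorder σ).Generic := by
  intro s X Y hX hY j hj hne
  have corr : ∀ Z : Fin n → Finset R,
      (G.reorder σ).costOn s Z j = G.costOn (s.image σ) (Z ∘ σ.symm) (σ j) := by
    intro Z
    rw [CGame.costOn, CGame.costOn]
    have hZj : (Z ∘ σ.symm) (σ j) = Z j := by simp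
    rw [hZj]
    apply Finset.sum_congr rfl
    intro r _
    show G.delay r _ = G.delay r _
    congr 1
    apply Finset.card_bij (fun i _ => σ i)
    · intro i hi
      rw [Finset.mem_filter] at hi ⊢
      refine ⟨Finset.mem_image_of_mem σ hi.1, ?_⟩
      simpa using hi.2
    · intro i _ j' _ h
      exact σ.injective h
    · intro k hk
      rw [Finset.mem_filter] at hk
      obtain ⟨i, his, rfl⟩ := Finset.mem_image.mp hk.1
      exact ⟨i, Finset.mem_filter.mpr ⟨his, by simpa using hk.2⟩, rfl⟩
  rw [corr X, corr Y]
  apply hgen (s.image σ) (X ∘ σ.symm) (Y ∘ σ.symm)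
  · intro i hi
    obtain ⟨k, hks, rfl⟩ := Finset.mem_image.mp hi
    show X (σ.symm (σ k)) ∈ G.actions (σ k)
    rw [Equiv.symm_apply_apply]
    exact hX k hks
  · intro i hi
    obtain ⟨k, hks, rfl⟩ := Finset.mem_image.mp hi
    show Y (σ.symm (σ k)) ∈ G.actions (σ k)
    rw [Equiv.symm_apply_apply]
    exact hY k hks
  · exact Finset.mem_image_of_mem σ hj
  · show X (σ.symm (σ j)) ≠ Y (σ.symm (σ j))
    rw [Equiv.symm_apply_apply]
    exact hne

end CGame

/-- In a generic singleton cost-sharing game, every subgame-perfect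
outcome (with respect to any order of the players) is a Nash equilibrium. -/
theorem generic_singleton_costsharing_SPO_is_NE {R : Type} [DecidableEq R] [Fintype R]
    {n : ℕ} (G : CGame R n)
    (hne : ∀ i, (G.actions i).Nonempty)
    (hsingle : ∀ i, ∀ A ∈ G.actions i, A.card = 1)
    (hanti : ∀ r, Antitone (G.delay r))
    (hnonneg : ∀ r m, 0 ≤ G.delay r m)
    (hgen : G.Generic)
    (A : Fin n → Finset R) (hA : CGame.IsSPOutcome G A) :
    G.IsNash A := by
  classical
  obtain ⟨σ, hspo⟩ := hA
  have hsingleH : ∀ i, ∀ B ∈ (G.reorder σ).actions i, B.card = 1 :=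
    fun i B hB => hsingle (σ i) B hB
  have hantiH : ∀ r, Antitone ((G.reorder σ).delay r) := hanti
  have hgenH := CGame.reorder_generic hgen σ
  have houtH : (G.reorder σ).IsOutcome (A ∘ σ) := CGame.isSPO_outcome _ _ hspo
  have hcanon := CGame.isSPO_canon (G.reorder σ) hsingleH hantiH hgenH (A ∘ σ) hspo
  have hnashH := CGame.canon_nash hsingleH hantiH houtH hcanon
  constructor
  · intro i
    have := houtH (σ.symm i)
    show A i ∈ G.actions i
    have h2 : A (σ (σ.symm i)) ∈ G.actions (σ (σ.symm i)) := this
    rwa [Equiv.apply_symm_apply] at h2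
  · intro i Bg hBg
    have hBg' : Bg ∈ (G.reorder σ).actions (σ.symm i) := by
      show Bg ∈ G.actions (σ (σ.symm i))
      rwa [Equiv.apply_symm_apply]
    have h := hnashH (σ.symm i) (Finset.mem_univ _) Bg hBg'
    have hupd : Function.update (A ∘ σ) (σ.symm i) Bg = (Function.update A i Bg) ∘ σ := by
      funext k
      by_cases hk : k = σ.symm i
      · subst hk
        rw [Function.update_self]
        show Bg = Function.update A i Bg (σ (σ.symm i))
        rw [Equiv.apply_symm_apply, Function.update_self]
      · rw [Function.update_of_ne hk]
        show (A ∘ σ) k = Function.update A i Bg (σ k)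
        rw [Function.update_of_ne (fun hc => hk (by rw [← hc]; simp))]
        rfl
    rw [hupd, CGame.cost_reorder, CGame.cost_reorder, Equiv.apply_symm_apply] at h
    exact h
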